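/- The unary representation theorem for monoidal profunctors: the end over all monoidal profunctors P of the set of functions P(A,B) → P(S,T) is isomorphic to the coproduct over n ∈ ℕ of (S → A^n) × (B^n → T). That is, ∫_{P monoidal profunctor} (P(A,B) → P(S,T)) ≅ Σ_{n∈ℕ} (S → A^n) × (B^n → T). -/

import Mathlib

universe u

/-- A monoidal profunctor on `Set` (cartesian): a profunctor
`P : Set^op × Set → Set` together with a unit `e ∈ P(1,1)` and a natural
multiplication `m : P a b × P c d → P (a×c) (b×d)` satisfying the monoid laws
for Day convolution. -/
structure MonoPro : Type (u + 1) where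
  obj : Type u → Type u → Type u
  dimap : ∀ {a b c d : Type u}, (a → b) → (c → d) → obj b c → obj a d
  dimap_id : ∀ {a b : Type u} (p : obj a b), dimap id id p = p
  dimap_comp : ∀ {a a' a'' b b' b'' : Type u}
      (f : a' → a) (f' : a'' → a') (g : b → b') (g' : b' → b'') (p : obj a b),
    dimap (f ∘ f') (g' ∘ g) p = dimap f' g' (dimap f g p)
  e : obj PUnit PUnit
  m : ∀ {a b c d : Type u}, obj a b → obj c d → obj (a × c) (b × d)
  natural : ∀ {a b c d a' b' c' d' : Type u}
      (f : a' → a) (g : b → b') (h : c' → c) (k : d → d')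
      (p : obj a b) (q : obj c d),
    m (dimap f g p) (dimap h k q) = dimap (Prod.map f h) (Prod.map g k) (m p q)
  left_unit : ∀ {a b : Type u} (p : obj a b),
    dimap (fun x => (PUnit.unit, x)) Prod.snd (m e p) = p
  right_unit : ∀ {a b : Type u} (p : obj a b),
    dimap (fun x => (x, PUnit.unit)) Prod.fst (m p e) = p
  assoc : ∀ {a₁ b₁ a₂ b₂ a₃ b₃ : Type u}
      (p : obj a₁ b₁) (q : obj a₂ b₂) (r : obj a₃ b₃),
    dimap (fun x : a₁ × a₂ × a₃ => ((x.1, x.2.1), x.2.2))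
      (fun y : (b₁ × b₂) × b₃ => (y.1.1, (y.1.2, y.2)))
      (m (m p q) r) = m p (m q r)

/-- A morphism of monoidal profunctors: a natural transformation preserving
the unit and the multiplication. -/
structure MonoProHom (P Q : MonoPro.{u}) : Type (u + 1) where
  app : ∀ (a b : Type u), P.obj a b → Q.obj a b
  natural : ∀ {a b c d : Type u} (f : a → b) (g : c → d) (p : P.obj b c),
    app a d (P.dimap f g p) = Q.dimap f g (app b c p)
  unit : app PUnit PUnit P.e = Q.e
  mul : ∀ {a b c d : Type u} (p : P.obj a b) (q : P.obj c d),
    app (a × c) (b × d) (P.m p q) = Q.m (app a b p) (app c d q)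

/-- An element of the end `∫_{P monoidal profunctor} (P(A,B) → P(S,T))`: a
family of maps, one for each monoidal profunctor, commuting with
monoidal-profunctor morphisms. -/
structure MonoProEnd (A B S T : Type u) : Type (u + 1) where
  app : ∀ P : MonoPro.{u}, P.obj A B → P.obj S T
  natural : ∀ (P Q : MonoPro.{u}) (h : MonoProHom P Q) (x : P.obj A B),
    h.app S T (app P x) = app Q (h.app A B x)

namespace MonoProAux

open MonoPro

/-- `n`-fold monoidal power of an element of a monoidal profunctor. -/
def mpow (P : MonoPro.{u}) {a b : Type u} (x : P.obj a b) :
    ∀ n : ℕ, P.obj (Fin n → a) (Fin n → b)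
  | 0 => P.dimap (fun _ => PUnit.unit) (fun _ => Fin.elim0) P.e
  | n + 1 => P.dimap (fun v => (fun i => v i.castSucc, v (Fin.last n)))
      (fun p => Fin.snoc p.1 p.2) (P.m (mpow P x n) x)

lemma dimap_dimap (P : MonoPro.{u}) {a a' a'' b b' b'' : Type u}
    (f : a' → a) (f' : a'' → a') (g : b → b') (g' : b' → b'') (p : P.obj a b) :
    P.dimap f' g' (P.dimap f g p) = P.dimap (f ∘ f') (g' ∘ g) p :=
  (P.dimap_comp f f' g g' p).symm

lemma dimap_congr (P : MonoPro.{u}) {a b c d : Type u} {f f' : a → b} {g g' : c → d}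
    (p : P.obj b c) (hf : f = f') (hg : g = g') :
    P.dimap f g p = P.dimap f' g' p := by rw [hf, hg]

lemma m_dimap_right (P : MonoPro.{u}) {a b c c' d d' : Type u}
    (f : c' → c) (g : d → d') (p : P.obj a b) (q : P.obj c d) :
    P.m p (P.dimap f g q)
      = P.dimap (Prod.map id f) (Prod.map id g) (P.m p q) := by
  conv_lhs => rw [← P.dimap_id p]
  rw [P.natural]

lemma m_dimap_left (P : MonoPro.{u}) {a a' b b' c d : Type u}
    (f : a' → a) (g : b → b') (p : P.obj a b) (q : P.obj c d) :
    P.m (P.dimap f g p) q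
      = P.dimap (Prod.map f id) (Prod.map g id) (P.m p q) := by
  conv_lhs => rw [← P.dimap_id q]
  rw [P.natural]

lemma hom_pow {P Q : MonoPro.{u}} (h : MonoProHom P Q) {a b : Type u} (x : P.obj a b) :
    ∀ n : ℕ, h.app _ _ (mpow P x n) = mpow Q (h.app a b x) n
  | 0 => by
      rw [mpow, mpow, h.natural, h.unit]
  | n + 1 => by
      rw [mpow, mpow, h.natural, h.mul, hom_pow h x n]

lemma pow_add (P : MonoPro.{u}) {a b : Type u} (x : P.obj a b) (k : ℕ) :
    ∀ k' : ℕ, mpow P x (k + k') =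
      P.dimap (fun w => (fun i => w (Fin.castAdd k' i), fun i => w (Fin.natAdd k i)))
        (fun p => Fin.append p.1 p.2)
        (P.m (mpow P x k) (mpow P x k'))
  | 0 => by
      conv_rhs => rw [mpow]
      rw [m_dimap_right, dimap_dimap]
      have h1 : (Prod.map (id : (Fin k → a) → _) (fun _ : Fin 0 → a => PUnit.unit) ∘
          fun w => (fun i => w (Fin.castAdd 0 i), fun i => w (Fin.natAdd k i)))
          = fun w : Fin (k + 0) → a => (w, PUnit.unit) := by
        funext w
        refine Prod.ext ?_ rfl
        funext i
        exact congrArg w (Fin.ext rfl)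
      have h2 : ((fun p : (Fin k → b) × (Fin 0 → b) => Fin.append p.1 p.2) ∘
          Prod.map (id : (Fin k → b) → _) (fun _ : PUnit => (Fin.elim0 : Fin 0 → b)))
          = (Prod.fst : (Fin k → b) × PUnit → Fin k → b) := by
        funext p
        exact Fin.append_elim0 p.1
      rw [dimap_congr P _ h1 h2]
      exact (P.right_unit (mpow P x k)).symm
  | k' + 1 => by
      show mpow P x ((k + k') + 1) = _
      conv_lhs => rw [mpow, pow_add P x k k', m_dimap_left, dimap_dimap]
      conv_rhs => rw [mpow, m_dimap_right, dimap_dimap]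
      rw [← P.assoc (mpow P x k) (mpow P x k') x,
        dimap_dimap]
      refine dimap_congr P _ ?_ ?_
      · funext w
        refine Prod.ext (Prod.ext ?_ ?_) ?_
        · funext i; exact congrArg w (Fin.ext rfl)
        · funext i; exact congrArg w (Fin.ext rfl)
        · exact congrArg w (Fin.ext (by simp))
      · funext p
        exact (Fin.append_snoc p.1.1 p.1.2 p.2).symm

lemma dimap_pow_one (P : MonoPro.{u}) {a b : Type u} (x : P.obj a b) :
    P.dimap (fun y (_ : Fin 1) => y) (fun h => h 0) (mpow P x 1) = x := by
  rw [mpow, mpow, m_dimap_left, dimap_dimap, dimap_dimap]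
  have h1 : ((Prod.map (fun _ : Fin 0 → a => PUnit.unit) (id : a → a)) ∘
      ((fun v : Fin 1 → a => (fun i => v i.castSucc, v (Fin.last 0))) ∘
        (fun y (_ : Fin 1) => y))) = fun y : a => (PUnit.unit, y) := rfl
  have h2 : (((fun h : Fin 1 → b => h 0) ∘
      (fun p : (Fin 0 → b) × b => Fin.snoc p.1 p.2)) ∘
      (Prod.map (fun _ : PUnit => (Fin.elim0 : Fin 0 → b)) (id : b → b)))
      = (Prod.snd : PUnit × b → b) := by
    funext p
    simp [Fin.snoc, Function.comp_def, Prod.map]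
  rw [dimap_congr P _ h1 h2, P.left_unit]


/-- Extensionality for the free monoidal profunctor's objects. -/
lemma FQ_ext {A B a b : Type u} {n n' : ℕ}
    {u : a → Fin n → A} {v : (Fin n → B) → b}
    {u' : a → Fin n' → A} {v' : (Fin n' → B) → b} (h : n = n')
    (hu : ∀ x i, u x i = u' x (Fin.cast h i))
    (hv : ∀ f : Fin n' → B, v (fun i => f (Fin.cast h i)) = v' f) :
    (⟨n, u, v⟩ : Σ k : ℕ, (a → Fin k → A) × ((Fin k → B) → b)) = ⟨n', u', v'⟩ := by
  subst h
  have hu' : u = u' := by funext x i; exact hu x i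
  have hv' : v = v' := by funext f; exact hv f
  rw [hu', hv']

/-- The free monoidal profunctor generated by `Hom(-, A) × Hom(B, -)`. -/
def FQ (A B : Type u) : MonoPro.{u} where
  obj a b := Σ n : ℕ, (a → Fin n → A) × ((Fin n → B) → b)
  dimap f g p := ⟨p.1, fun x => p.2.1 (f x), fun h => g (p.2.2 h)⟩
  dimap_id p := rfl
  dimap_comp f f' g g' p := rfl
  e := ⟨0, fun _ => Fin.elim0, fun _ => PUnit.unit⟩
  m p q := ⟨p.1 + q.1, fun z => Fin.append (p.2.1 z.1) (q.2.1 z.2),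
    fun h => (p.2.2 (fun i => h (Fin.castAdd q.1 i)),
              q.2.2 (fun i => h (Fin.natAdd p.1 i)))⟩
  natural f g h k p q := rfl
  left_unit p := by
    obtain ⟨n, u, v⟩ := p
    refine FQ_ext (Nat.zero_add n) ?_ ?_
    · intro x i
      exact congrFun (Fin.elim0_append (u x)) i
    · intro f
      refine congrArg v (funext fun i => congrArg f (Fin.ext ?_))
      simp
  right_unit p := by
    obtain ⟨n, u, v⟩ := p
    refine FQ_ext rfl ?_ ?_
    · intro x i
      exact congrFun (Fin.append_elim0 (u x)) i
    · intro f
      refine congrArg v (funext fun i => congrArg f (Fin.ext ?_))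
      simp
  assoc p q r := by
    obtain ⟨k₁, u₁, v₁⟩ := p
    obtain ⟨k₂, u₂, v₂⟩ := q
    obtain ⟨k₃, u₃, v₃⟩ := r
    refine FQ_ext (Nat.add_assoc k₁ k₂ k₃) ?_ ?_
    · intro x i
      exact congrFun (Fin.append_assoc (u₁ x.1) (u₂ x.2.1) (u₃ x.2.2)) i
    · intro f
      dsimp only
      refine Prod.ext ?_ (Prod.ext ?_ ?_)
      · exact congrArg v₁ (funext fun i => congrArg f (Fin.ext (by simp)))
      · exact congrArg v₂ (funext fun i => congrArg f (Fin.ext (by simp)))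
      · exact congrArg v₃ (funext fun i => congrArg f (Fin.ext (by
          simp [Nat.add_assoc])))

/-- The identity element of the free monoidal profunctor. -/
def idQ (A B : Type u) : (FQ A B).obj A B :=
  ⟨1, fun a _ => a, fun h => h 0⟩

lemma FQ_pow_id (A B : Type u) :
    ∀ n : ℕ, mpow (FQ A B) (idQ A B) n
      = (⟨n, fun w => w, fun h => h⟩ :
          Σ k : ℕ, (((Fin n → A) → Fin k → A) × ((Fin k → B) → Fin n → B)))
  | 0 => by
      rw [mpow]
      refine FQ_ext rfl ?_ ?_
      · intro x i; exact i.elim0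
      · intro f; funext i; exact i.elim0
  | n + 1 => by
      rw [mpow, FQ_pow_id A B n]
      refine FQ_ext rfl ?_ ?_
      · intro w i
        show Fin.append (fun i => w i.castSucc) (fun _ => w (Fin.last n)) i
          = w (Fin.cast rfl i)
        refine (congrFun (Fin.append_right_eq_snoc (fun i => w i.castSucc) (fun _ => w (Fin.last n))) i).trans ?_
        exact congrFun (Fin.snoc_init_self w) i
      · intro f
        show Fin.snoc (fun i => f (Fin.cast rfl (Fin.castAdd 1 i)))
            (f (Fin.cast rfl (Fin.natAdd n 0))) = f
        have h1 : (Fin.cast rfl (Fin.natAdd n (0 : Fin 1))) = Fin.last n :=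
          Fin.ext (by simp)
        rw [h1]
        exact Fin.snoc_init_self f

/-- The canonical element `x ↦ dimap f g (xⁿ)` of the end. -/
def toEnd (A B S T : Type u)
    (s : Σ n : ℕ, (S → Fin n → A) × ((Fin n → B) → T)) :
    MonoProEnd A B S T where
  app P x := P.dimap s.2.1 s.2.2 (mpow P x s.1)
  natural P Q h x := by rw [h.natural, hom_pow]

/-- The canonical monoidal-profunctor morphism out of the free one. -/
def homFQ (A B : Type u) (P : MonoPro.{u}) (x : P.obj A B) :
    MonoProHom (FQ A B) P where
  app a b q := P.dimap q.2.1 q.2.2 (mpow P x q.1)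
  natural f g p := P.dimap_comp p.2.1 f p.2.2 g (mpow P x p.1)
  unit := by
    show P.dimap (fun _ : PUnit => (Fin.elim0 : Fin 0 → A))
      (fun _ => PUnit.unit) (mpow P x 0) = P.e
    rw [mpow, dimap_dimap]
    show P.dimap id id P.e = P.e
    exact P.dimap_id P.e
  mul p q := by
    show P.dimap _ _ (mpow P x (p.1 + q.1)) = _
    rw [pow_add]
    refine (dimap_dimap P _ _ _ _ _).trans (Eq.trans ?_ (P.natural _ _ _ _ _ _).symm)
    refine dimap_congr P _ ?_ ?_
    · funext z
      refine Prod.ext ?_ ?_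
      · funext i; exact Fin.append_left _ _ i
      · funext i; exact Fin.append_right _ _ i
    · funext h
      refine Prod.ext ?_ ?_
      · exact congrArg p.2.2 (funext fun i => Fin.append_left _ _ i)
      · exact congrArg q.2.2 (funext fun i => Fin.append_right _ _ i)

lemma end_ext {A B S T : Type u} {t1 t2 : MonoProEnd A B S T}
    (h : t1.app = t2.app) : t1 = t2 := by
  cases t1; cases t2
  cases h
  rfl

end MonoProAux

/-- the unary representation theorem for monoidal profunctors:
`∫_{P monoidal profunctor} (P(A,B) → P(S,T)) ≅ Σ_{n ∈ ℕ} (S → Aⁿ) × (Bⁿ → T)`. -/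
theorem monoPro_unary_representation (A B S T : Type u) :
    Nonempty (MonoProEnd A B S T ≃
      Σ n : ℕ, (S → (Fin n → A)) × ((Fin n → B) → T)) := by
  refine ⟨{
    toFun := fun θ => θ.app (MonoProAux.FQ A B) (MonoProAux.idQ A B)
    invFun := MonoProAux.toEnd A B S T
    left_inv := ?_
    right_inv := ?_ }⟩
  · intro θ
    refine MonoProAux.end_ext (funext fun P => funext fun x => ?_)
    have key := θ.natural (MonoProAux.FQ A B) P (MonoProAux.homFQ A B P x)
      (MonoProAux.idQ A B)
    have hx : (MonoProAux.homFQ A B P x).app A B (MonoProAux.idQ A B) = x :=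
      MonoProAux.dimap_pow_one P x
    rw [hx] at key
    exact key
  · intro s
    show (MonoProAux.FQ A B).dimap s.2.1 s.2.2
      (MonoProAux.mpow (MonoProAux.FQ A B) (MonoProAux.idQ A B) s.1) = s
    rw [MonoProAux.FQ_pow_id]
    rfl
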